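/- No simplified counter machine accepts the language {a^m b^{2m} : m ∈ ℕ} in real time. (A simplified counter machine is one whose counter update function depends only on the input symbol and uses only updates in {-1, +0, +1, ×0}.) -/

import Mathlib

/-- A counter update: add an integer, or reset to zero (the ×0 operation). -/
inductive CUpd where
  | add (m : ℤ)
  | reset
deriving DecidableEq

def CUpd.apply : CUpd → ℤ → ℤ
  | .add m, c => c + m
  | .reset, _ => 0

/-- A general real-time counter machine with states `Fin n` and `k` counters. -/
structure CM (σ : Type) (n k : ℕ) where
  q0 : Fin n
  u : σ → Fin n → (Fin k → Bool) → Fin k → CUpd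
  δ : σ → Fin n → (Fin k → Bool) → Fin n
  F : Set (Fin n × (Fin k → Bool))

/-- Elementwise zero-check: `false` if the counter is 0, `true` otherwise. -/
def zcheck {k : ℕ} (c : Fin k → ℤ) : Fin k → Bool :=
  fun i => decide (c i ≠ 0)

def CM.step {σ : Type} {n k : ℕ} (M : CM σ n k) (cfg : Fin n × (Fin k → ℤ)) (x : σ) :
    Fin n × (Fin k → ℤ) :=
  (M.δ x cfg.1 (zcheck cfg.2), fun i => (M.u x cfg.1 (zcheck cfg.2) i).apply (cfg.2 i))

/-- Real-time run: start at `⟨q₀, 0⟩` and take one transition per input token. -/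
def CM.run {σ : Type} {n k : ℕ} (M : CM σ n k) (xs : List σ) : Fin n × (Fin k → ℤ) :=
  xs.foldl M.step (M.q0, fun _ => 0)

def CM.accepts {σ : Type} {n k : ℕ} (M : CM σ n k) (xs : List σ) : Prop :=
  ((M.run xs).1, zcheck (M.run xs).2) ∈ M.F

def CM.acceptsLang {σ : Type} {n k : ℕ} (M : CM σ n k) (L : Set (List σ)) : Prop :=
  ∀ xs, M.accepts xs ↔ xs ∈ L

/-- An update is incremental if it is `×0` or adds a value in `{-1, 0, +1}`. -/
def CUpd.incremental : CUpd → Prop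
  | .add m => m.natAbs ≤ 1
  | .reset => True

/-- A machine is simplified if its updates depend only on the input symbol and
are restricted to `{-1, +0, +1, ×0}`. -/
def CM.simplified {σ : Type} {n k : ℕ} (M : CM σ n k) : Prop :=
  (∀ x q q' b b', M.u x q b = M.u x q' b') ∧ ∀ x q b i, (M.u x q b i).incremental

/-- The class of languages accepted in real time by general counter machines. -/
def CL (σ : Type) : Set (Set (List σ)) :=
  {L | ∃ n k, ∃ M : CM σ n k, M.acceptsLang L}

inductive AB where
  | a
  | b
deriving DecidableEq

/-- The language `{aᵐ b²ᵐ : m ∈ ℕ}`. -/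
def Lab2 : Set (List AB) :=
  {xs | ∃ m : ℕ, xs = List.replicate m AB.a ++ List.replicate (2 * m) AB.b}

namespace Stmt1Aux

variable {n k : ℕ}

/-- The (state-independent) update of a simplified machine. -/
def ud (M : CM AB n k) (x : AB) : Fin k → CUpd := M.u x M.q0 (fun _ => false)

def vA (M : CM AB n k) (i : Fin k) (m : ℕ) : ℤ :=
  match ud M AB.a i with
  | .add d => d * m
  | .reset => 0

def vB (M : CM AB n k) (i : Fin k) (m j : ℕ) : ℤ :=
  match ud M AB.b i with
  | .add e => vA M i m + e * j
  | .reset => 0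

def pat (M : CM AB n k) : Fin k → Bool := fun i =>
  match ud M AB.b i with
  | .reset => false
  | .add e =>
    if e = 0 then
      match ud M AB.a i with
      | .add d => decide (d ≠ 0)
      | .reset => false
    else true

def w (m j : ℕ) : List AB := List.replicate m AB.a ++ List.replicate j AB.b

lemma run_append (M : CM AB n k) (xs : List AB) (x : AB) :
    M.run (xs ++ [x]) = M.step (M.run xs) x := by
  simp [CM.run, List.foldl_append]

lemma run_a (M : CM AB n k) (hu : ∀ x q b, M.u x q b = ud M x) (m : ℕ) :
    (M.run (List.replicate m AB.a)).2 = fun i => vA M i m := by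
  induction m with
  | zero =>
    funext i
    simp only [List.replicate_zero, CM.run, List.foldl_nil, vA]
    cases h : ud M AB.a i <;> simp [h]
  | succ m ih =>
    rw [List.replicate_succ', run_append]
    funext i
    simp only [CM.step, hu, ih, vA]
    cases h : ud M AB.a i with
    | add d => simp only [h, CUpd.apply]; push_cast; ring
    | reset => simp [h, CUpd.apply]

lemma run_w_b (M : CM AB n k) (hu : ∀ x q b, M.u x q b = ud M x) (m j : ℕ) :
    (M.run (w m (j + 1))).2 = fun i => vB M i m (j + 1) := by
  induction j with
  | zero =>
    have : w m 1 = List.replicate m AB.a ++ [AB.b] := by simp [w]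
    rw [this, run_append]
    funext i
    simp only [CM.step, hu, run_a M hu, vB]
    cases h : ud M AB.b i with
    | add e => simp only [h, CUpd.apply]; push_cast; ring
    | reset => simp [h, CUpd.apply]
  | succ j ih =>
    have : w m (j + 2) = w m (j + 1) ++ [AB.b] := by
      simp [w, List.replicate_succ' (n := j+1), List.append_assoc]
    rw [this, run_append]
    funext i
    simp only [CM.step, hu, ih, vB]
    cases h : ud M AB.b i with
    | add e => simp only [h, CUpd.apply]; push_cast; ring
    | reset => simp [h, CUpd.apply]

lemma zcheck_vB (M : CM AB n k) (hinc : ∀ x i, (ud M x i).incremental)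
    (m j : ℕ) (hm : 1 ≤ m) (hj : m < j) :
    zcheck (fun i => vB M i m j) = pat M := by
  funext i
  have ha := hinc AB.a i
  have hb := hinc AB.b i
  simp only [zcheck]
  cases hB : ud M AB.b i with
  | reset => simp [vB, pat, hB]
  | add e =>
    rw [hB] at hb
    have he : e = -1 ∨ e = 0 ∨ e = 1 := by
      simp only [CUpd.incremental] at hb; omega
    cases hA : ud M AB.a i with
    | reset =>
      rcases he with rfl | rfl | rfl <;> simp [vB, vA, pat, hB, hA] <;> omega
    | add d =>
      rw [hA] at ha
      have hd : d = -1 ∨ d = 0 ∨ d = 1 := by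
        simp only [CUpd.incremental] at ha; omega
      rcases he with rfl | rfl | rfl <;> rcases hd with rfl | rfl | rfl <;>
        simp [vB, vA, pat, hB, hA] <;> omega

lemma zcheck_run (M : CM AB n k) (hu : ∀ x q b, M.u x q b = ud M x)
    (hinc : ∀ x i, (ud M x i).incremental) (m j : ℕ) (hm : 1 ≤ m) (hj : m < j) :
    zcheck (M.run (w m j)).2 = pat M := by
  obtain ⟨j', rfl⟩ : ∃ j', j = j' + 1 := ⟨j - 1, by omega⟩
  rw [run_w_b M hu]
  exact zcheck_vB M hinc m (j' + 1) hm hj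

def g (M : CM AB n k) : Fin n → Fin n := fun q => M.δ AB.b q (pat M)

lemma state_w (M : CM AB n k) (hu : ∀ x q b, M.u x q b = ud M x)
    (hinc : ∀ x i, (ud M x i).incremental) (m : ℕ) (hm : 1 ≤ m) (t : ℕ) :
    (M.run (w m (m + 1 + t))).1 = (g M)^[t] ((M.run (w m (m + 1))).1) := by
  induction t with
  | zero => rfl
  | succ t ih =>
    have hsplit : w m (m + 1 + (t + 1)) = w m (m + 1 + t) ++ [AB.b] := by
      simp [w, show m + 1 + (t + 1) = (m + 1 + t) + 1 from rfl,
        List.replicate_succ' (n := m + 1 + t), List.append_assoc]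
    rw [hsplit, run_append]
    have hz := zcheck_run M hu hinc m (m + 1 + t) hm (by omega)
    simp only [CM.step, hz, ih, Function.iterate_succ_apply']
    rfl

end Stmt1Aux
/-- No simplified counter machine accepts `{aᵐ b²ᵐ}` in real time. -/
theorem stmt1 (n k : ℕ) (M : CM AB n k) (hM : M.simplified) : ¬ M.acceptsLang Lab2 := by
  intro hAcc
  obtain ⟨hu0, hinc0⟩ := hM
  have hu : ∀ x q b, M.u x q b = Stmt1Aux.ud M x := fun x q b => hu0 x q M.q0 b (fun _ => false)
  have hinc : ∀ x i, (Stmt1Aux.ud M x i).incremental := fun x i => hinc0 x M.q0 (fun _ => false) i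
  set m : ℕ := n + 1 with hmdef
  set q : Fin n := (M.run (Stmt1Aux.w m (m + 1))).1 with hqdef
  -- pigeonhole on iterates of g
  obtain ⟨s, t, hst, heq⟩ :
      ∃ s t : Fin (n + 1), s ≠ t ∧ (Stmt1Aux.g M)^[s] q = (Stmt1Aux.g M)^[t] q := by
    apply Fintype.exists_ne_map_eq_of_card_lt (fun t : Fin (n + 1) => (Stmt1Aux.g M)^[t] q)
    simp
  -- wlog s < t
  obtain ⟨a, b, hab1, hab2, heq⟩ :
      ∃ a b : ℕ, a < b ∧ b ≤ n ∧ (Stmt1Aux.g M)^[a] q = (Stmt1Aux.g M)^[b] q := by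
    rcases lt_or_gt_of_ne hst with h | h
    · exact ⟨s, t, h, Nat.lt_succ_iff.mp t.isLt, heq⟩
    · exact ⟨t, s, h, Nat.lt_succ_iff.mp s.isLt, heq.symm⟩
  set p : ℕ := b - a with hpdef
  have hp : 1 ≤ p := by omega
  -- periodicity at iterate n
  have hper : (Stmt1Aux.g M)^[n] q = (Stmt1Aux.g M)^[n + p] q := by
    have h1 : n + p = (n - a) + b := by omega
    have h2 : n = (n - a) + a := by omega
    rw [h1, Function.iterate_add_apply, ← heq, ← Function.iterate_add_apply, ← h2]
  have hstate : (M.run (Stmt1Aux.w m (2 * m))).1 = (M.run (Stmt1Aux.w m (2 * m + p))).1 := by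
    have e1 : 2 * m = m + 1 + n := by omega
    have e2 : 2 * m + p = m + 1 + (n + p) := by omega
    rw [e2, e1, Stmt1Aux.state_w M hu hinc m (by omega), Stmt1Aux.state_w M hu hinc m (by omega),
      ← hqdef, hper]
  have hz1 : zcheck (M.run (Stmt1Aux.w m (2 * m))).2 = Stmt1Aux.pat M :=
    Stmt1Aux.zcheck_run M hu hinc m (2 * m) (by omega) (by omega)
  have hz2 : zcheck (M.run (Stmt1Aux.w m (2 * m + p))).2 = Stmt1Aux.pat M :=
    Stmt1Aux.zcheck_run M hu hinc m (2 * m + p) (by omega) (by omega)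
  have hiff : M.accepts (Stmt1Aux.w m (2 * m)) ↔ M.accepts (Stmt1Aux.w m (2 * m + p)) := by
    unfold CM.accepts
    rw [hstate, hz1, hz2]
  have h1 : Stmt1Aux.w m (2 * m) ∈ Lab2 := ⟨m, rfl⟩
  have h2 : Stmt1Aux.w m (2 * m + p) ∈ Lab2 :=
    (hAcc _).mp (hiff.mp ((hAcc _).mpr h1))
  obtain ⟨m', hm'⟩ := h2
  have hca := congrArg (List.count AB.a) hm'
  have hcb := congrArg (List.count AB.b) hm'
  simp [Stmt1Aux.w, List.count_append, List.count_replicate] at hca hcb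
  omega
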